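/- The distribution function F of ψ satisfies the exact self-similarity relation F(s) = λ · F(2s) for every s ∈ [0, 1/2]. (Scaling relation underlying the computations of the extremal index and of the anchored tail process.) -/

import Mathlib

open Set MeasureTheory Filter
open scoped ENNReal Topology Classical

/-- The setup of Section 2 of the paper: a full-branched Markov linear map `G` on `[0,1]`
with branch domains `I_1,…,I_{k_I}` (mapped affinely onto `[0,1]`) and complementary
intervals `J_j` (mapped affinely onto `(0,1)`), all of length at most `1/2`. -/
structure CantorData where
  kI : ℕ
  hkI : 1 ≤ kI
  a : ℕ → ℝ
  ha_lt : ∀ i, i + 1 < 2 * kI → a i < a (i + 1)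
  ha0 : 0 ≤ a 0
  ha1 : a (2 * kI - 1) ≤ 1
  G : ℝ → ℝ
  hGmaps : Set.MapsTo G (Set.Icc 0 1) (Set.Icc 0 1)
  hGI : ∀ i < kI, ∃ s c : ℝ,
    |s| * (a (2 * i + 1) - a (2 * i)) = 1 ∧
    (∀ x ∈ Set.Icc (a (2 * i)) (a (2 * i + 1)), G x = s * x + c) ∧
    Set.BijOn G (Set.Icc (a (2 * i)) (a (2 * i + 1))) (Set.Icc 0 1)
  hGJmid : ∀ i, i + 1 < kI → ∃ s c : ℝ,
    |s| * (a (2 * i + 2) - a (2 * i + 1)) = 1 ∧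
    (∀ x ∈ Set.Ioo (a (2 * i + 1)) (a (2 * i + 2)), G x = s * x + c) ∧
    Set.SurjOn G (Set.Ioo (a (2 * i + 1)) (a (2 * i + 2))) (Set.Ioo 0 1)
  hGJleft : 0 < a 0 → ∃ s c : ℝ,
    |s| * a 0 = 1 ∧
    (∀ x ∈ Set.Ico 0 (a 0), G x = s * x + c) ∧
    Set.SurjOn G (Set.Ico 0 (a 0)) (Set.Ioo 0 1)
  hGJright : a (2 * kI - 1) < 1 → ∃ s c : ℝ,
    |s| * (1 - a (2 * kI - 1)) = 1 ∧
    (∀ x ∈ Set.Ioc (a (2 * kI - 1)) 1, G x = s * x + c) ∧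
    Set.SurjOn G (Set.Ioc (a (2 * kI - 1)) 1) (Set.Ioo 0 1)
  hIlen : ∀ i < kI, a (2 * i + 1) - a (2 * i) ≤ 1 / 2
  hJlenL : a 0 ≤ 1 / 2
  hJlenR : 1 - a (2 * kI - 1) ≤ 1 / 2
  hJlenM : ∀ i, i + 1 < kI → a (2 * i + 2) - a (2 * i + 1) ≤ 1 / 2
  hkJ : (Set.Icc (0:ℝ) 1 \ ⋃ i ∈ Finset.range kI,
      Set.Icc (a (2 * i)) (a (2 * i + 1))).Nonempty

namespace CantorData

variable (S : CantorData)

/-- The union `⋃_i I_i` of the branch domains forming the Cantor construction. -/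
def IU : Set ℝ := ⋃ i ∈ Finset.range S.kI, Set.Icc (S.a (2 * i)) (S.a (2 * i + 1))

/-- `Λ_n = {x ∈ [0,1] : G^{i-1}(x) ∈ ⋃ I for all 1 ≤ i ≤ n}`. -/
def Lam (n : ℕ) : Set ℝ := {x ∈ Set.Icc (0:ℝ) 1 | ∀ i < n, S.G^[i] x ∈ S.IU}

/-- The dynamically defined Cantor set `Λ = ⋂_n Λ_n`. -/
def Cantor : Set ℝ := ⋂ n : ℕ, S.Lam n

/-- `λ = |⋃ I_i| = Σ_i 1/m_i`. -/
noncomputable def lam : ℝ := ∑ i ∈ Finset.range S.kI, (S.a (2 * i + 1) - S.a (2 * i))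

/-- `𝔪`, Lebesgue measure on `[0,1]`. -/
noncomputable def mes (_S : CantorData) : Measure ℝ := volume.restrict (Set.Icc 0 1)

/-- `ψ(x) = Σ_{i ∈ 𝓘_x} 2^{-i}` where `𝓘_x = {i ≥ 1 : G^{i-1}(x) ∉ ⋃ I}`. -/
noncomputable def psi (x : ℝ) : ℝ :=
  ∑' i : ℕ, if S.G^[i] x ∈ S.IU then 0 else (2:ℝ)⁻¹ ^ (i + 1)

/-- `F(t) = 𝔪{x : ψ(x) ≤ t}`, the distribution function of `ψ`. -/
noncomputable def F (t : ℝ) : ℝ := (S.mes {x | S.psi x ≤ t}).toReal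

/-- `φ_α = (F ∘ ψ)^{-1/α}`, with value `∞` where `F ∘ ψ` vanishes. -/
noncomputable def phi (α : ℝ) (x : ℝ) : ℝ≥0∞ :=
  ENNReal.ofReal (S.F (S.psi x)) ^ (-(1 / α))

/-- `X_n = φ_α ∘ G^n`. -/
noncomputable def X (α : ℝ) (n : ℕ) (x : ℝ) : ℝ≥0∞ := S.phi α (S.G^[n] x)

/-- `P_n`: the points following the Cantor construction exactly `n` steps and
never entering `⋃ I` afterwards. -/
def Pset (n : ℕ) : Set ℝ :=
  {x ∈ Set.Icc (0:ℝ) 1 | (∀ i < n, S.G^[i] x ∈ S.IU) ∧ ∀ i, n ≤ i → S.G^[i] x ∉ S.IU}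

/-- The family of partition intervals `(I,J)_1,…,(I,J)_{k_I+k_J}`. -/
def PieceFamily : Set (Set ℝ) :=
  ((fun i => Set.Icc (S.a (2 * i)) (S.a (2 * i + 1))) '' Set.Iio S.kI) ∪
  ((fun i => Set.Ioo (S.a (2 * i + 1)) (S.a (2 * i + 2))) '' {i | i + 1 < S.kI}) ∪
  {Set.Ico (0:ℝ) (S.a 0), Set.Ioc (S.a (2 * S.kI - 1)) 1}

/-- The depth-`d` cylinder `C_w = ⋂_{k=1}^d G^{-(k-1)}((I,J)_{w_k})`. -/
def Cyl (d : ℕ) (w : ℕ → Set ℝ) : Set ℝ := ⋂ k ∈ Finset.range d, (S.G^[k]) ⁻¹' (w k)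

/-- `C` is a depth-`d` cylinder. -/
def IsCylinder (d : ℕ) (C : Set ℝ) : Prop :=
  ∃ w : ℕ → Set ℝ, (∀ k < d, w k ∈ S.PieceFamily) ∧ C = S.Cyl d w

/-- `Υ⁺(A,d)`: union of the depth-`d` cylinders meeting `A`. -/
def upApprox (A : Set ℝ) (d : ℕ) : Set ℝ :=
  ⋃₀ {C | S.IsCylinder d C ∧ (C ∩ A).Nonempty}

/-- `Υ⁻(A,d)`: union of the depth-`d` cylinders contained in `A`. -/
def lowApprox (A : Set ℝ) (d : ℕ) : Set ℝ :=
  ⋃₀ {C | S.IsCylinder d C ∧ C ⊆ A}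

/-- `u_n(τ) = (n/τ)^{1/α}`. -/
noncomputable def un (_S : CantorData) (α τ : ℝ) (n : ℕ) : ℝ := ((n : ℝ) / τ) ^ (1 / α)

/-- `U_n(τ) = {X_0 > u_n(τ)}`. -/
noncomputable def Un (α τ : ℝ) (n : ℕ) : Set ℝ :=
  {x ∈ Set.Icc (0:ℝ) 1 | ENNReal.ofReal (S.un α τ n) < S.X α 0 x}

/-- `U_n^{(1)}(τ) = U_n(τ) ∩ G^{-1}([0,1] ∖ U_n(τ))`. -/
noncomputable def Un1 (α τ : ℝ) (n : ℕ) : Set ℝ :=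
  S.Un α τ n ∩ S.G ⁻¹' (Set.Icc 0 1 \ S.Un α τ n)

/-- `U_n(τ',τ'') = U_n(τ') ∖ U_n(τ'')`. -/
noncomputable def UnPair (α τ' τ'' : ℝ) (n : ℕ) : Set ℝ := S.Un α τ' n \ S.Un α τ'' n

/-- `U_n(τ',τ'')^{(1)}`. -/
noncomputable def UnPair1 (α τ' τ'' : ℝ) (n : ℕ) : Set ℝ :=
  S.UnPair α τ' τ'' n ∩ S.G ⁻¹' (Set.Icc 0 1 \ S.UnPair α τ' τ'' n)

/-- `j_{n,τ}`: the least `j` with `λ^j ≤ τ/n`. -/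
noncomputable def jn (τ : ℝ) (n : ℕ) : ℕ := sInf {j : ℕ | S.lam ^ j ≤ τ / n}

/-- `Γ_n^+`: outer approximation of `U_n(τ',τ'')^{(1)}` by depth-`2 j_{n,τ'}` cylinders. -/
noncomputable def GammaPlus (α τ' τ'' : ℝ) (n : ℕ) : Set ℝ :=
  S.upApprox (S.UnPair1 α τ' τ'' n) (2 * S.jn τ' n)

/-- `Γ_n^-`: inner approximation of `U_n(τ',τ'')^{(1)}` by depth-`2 j_{n,τ'}` cylinders. -/
noncomputable def GammaMinus (α τ' τ'' : ℝ) (n : ℕ) : Set ℝ :=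
  S.lowApprox (S.UnPair1 α τ' τ'' n) (2 * S.jn τ' n)

end CantorData


section Aux
variable {kI : ℕ} {a : ℕ → ℝ}

/-- strict monotonicity of `a` on `[0, 2kI)`. -/
theorem aux_a_strict (ha : ∀ i, i + 1 < 2 * kI → a i < a (i + 1)) :
    ∀ j, ∀ i, i < j → j < 2 * kI → a i < a j := by
  intro j
  induction j with
  | zero => omega
  | succ n ih =>
    intro i hi hj
    rcases Nat.lt_succ_iff_lt_or_eq.mp hi with h | h
    · exact (ih i h (by omega)).trans (ha n (by omega))
    · subst h; exact ha i (by omega)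

theorem aux_a_mono (ha : ∀ i, i + 1 < 2 * kI → a i < a (i + 1)) :
    ∀ i j, i ≤ j → j < 2 * kI → a i ≤ a j := by
  intro i j hij hj
  rcases eq_or_lt_of_le hij with h | h
  · exact h ▸ le_rfl
  · exact (aux_a_strict ha j i h hj).le

end Aux

namespace CantorData

variable (S : CantorData)

lemma a_strict : ∀ i j, i < j → j < 2 * S.kI → S.a i < S.a j := by
  intro i j h hj; exact aux_a_strict S.ha_lt j i h hj

lemma a_mono : ∀ i j, i ≤ j → j < 2 * S.kI → S.a i ≤ S.a j :=
  fun i j h hj => aux_a_mono S.ha_lt i j h hj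

lemma a_nonneg : ∀ i, i < 2 * S.kI → 0 ≤ S.a i := by
  intro i hi; exact S.ha0.trans (S.a_mono 0 i (Nat.zero_le _) hi)

lemma a_le_one : ∀ i, i < 2 * S.kI → S.a i ≤ 1 := by
  intro i hi
  exact (S.a_mono i (2 * S.kI - 1) (by omega) (by have := S.hkI; omega)).trans S.ha1

lemma Icc_piece_subset : ∀ i < S.kI,
    Icc (S.a (2 * i)) (S.a (2 * i + 1)) ⊆ Icc (0:ℝ) 1 := by
  intro i hi
  exact Icc_subset_Icc (S.a_nonneg _ (by omega)) (S.a_le_one _ (by omega))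

lemma IU_subset : S.IU ⊆ Icc (0:ℝ) 1 := by
  intro x hx
  simp only [IU, Finset.mem_range, mem_iUnion] at hx
  obtain ⟨i, hi, hx⟩ := hx
  exact S.Icc_piece_subset i hi hx

lemma measurable_IU : MeasurableSet S.IU := by
  exact MeasurableSet.biUnion (Finset.range S.kI).countable_toSet
    fun i _ => measurableSet_Icc

lemma mem_IU_iff {x : ℝ} : x ∈ S.IU ↔ ∃ i < S.kI, x ∈ Icc (S.a (2 * i)) (S.a (2 * i + 1)) := by
  simp only [IU, Finset.mem_range, mem_iUnion, exists_prop]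

lemma I_disjoint : ∀ i < S.kI, ∀ j < S.kI, i ≠ j →
    Disjoint (Icc (S.a (2 * i)) (S.a (2 * i + 1))) (Icc (S.a (2 * j)) (S.a (2 * j + 1))) := by
  have key : ∀ i j, i < j → j < S.kI →
      Disjoint (Icc (S.a (2 * i)) (S.a (2 * i + 1))) (Icc (S.a (2 * j)) (S.a (2 * j + 1))) := by
    intro i j hij hj
    rw [Set.disjoint_left]
    rintro x ⟨-, h1⟩ ⟨h2, -⟩
    have : S.a (2 * i + 1) < S.a (2 * j) := S.a_strict _ _ (by omega) (by omega)
    linarith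
  intro i hi j hj hij
  rcases Nat.lt_or_ge i j with h | h
  · exact key i j h hj
  · exact (key j i (by omega) hi).symm

lemma cover : ∀ x ∈ Icc (0:ℝ) 1, x ∈ Ico 0 (S.a 0) ∨
    (∃ i < S.kI, x ∈ Icc (S.a (2 * i)) (S.a (2 * i + 1))) ∨
    (∃ i, i + 1 < S.kI ∧ x ∈ Ioo (S.a (2 * i + 1)) (S.a (2 * i + 2))) ∨
    x ∈ Ioc (S.a (2 * S.kI - 1)) 1 := by
  rintro x ⟨hx0, hx1⟩
  by_cases hL : x < S.a 0
  · exact Or.inl ⟨hx0, hL⟩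
  push_neg at hL
  by_cases hR : S.a (2 * S.kI - 1) < x
  · exact Or.inr (Or.inr (Or.inr ⟨hR, hx1⟩))
  push_neg at hR
  set k := Nat.findGreatest (fun k => S.a k ≤ x) (2 * S.kI - 1) with hk
  have hkle : k ≤ 2 * S.kI - 1 := Nat.findGreatest_le _
  have hak : S.a k ≤ x := Nat.findGreatest_spec (P := fun k => S.a k ≤ x) (Nat.zero_le _) hL
  have hgt : ∀ m, k < m → m ≤ 2 * S.kI - 1 → x < S.a m := by
    intro m h1 h2
    have := Nat.findGreatest_is_greatest (P := fun k => S.a k ≤ x) h1 h2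
    exact lt_of_not_ge this
  rcases Nat.even_or_odd k with ⟨i, hi⟩ | ⟨i, hi⟩
  · -- k = 2i
    have hikI : i < S.kI := by have := S.hkI; omega
    have hkne : k ≠ 2 * S.kI - 1 := by have := S.hkI; omega
    have hklt : k < 2 * S.kI - 1 := lt_of_le_of_ne hkle hkne
    refine Or.inr (Or.inl ⟨i, hikI, ?_, ?_⟩)
    · rw [show 2 * i = k by omega]; exact hak
    · have := hgt (k + 1) (Nat.lt_succ_self _) (by omega)
      rw [show 2 * i + 1 = k + 1 by omega]; exact this.le
  · -- k = 2i+1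
    have hikI : i < S.kI := by have := S.hkI; omega
    rcases eq_or_lt_of_le hak with heq | hlt
    · refine Or.inr (Or.inl ⟨i, hikI, ?_, by rw [show 2 * i + 1 = k by omega]; exact heq.ge⟩)
      refine le_trans (S.a_mono (2 * i) (2 * i + 1) (by omega) (by omega)) ?_
      rw [show 2 * i + 1 = k by omega]; exact heq.le
    · have hklt : k < 2 * S.kI - 1 := by
        rcases eq_or_lt_of_le hkle with h | h
        · exfalso; rw [h] at hlt; linarith
        · exact h
      have hi1 : i + 1 < S.kI := by omega
      refine Or.inr (Or.inr (Or.inl ⟨i, hi1, ?_, ?_⟩))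
      · rw [show 2 * i + 1 = k by omega]; exact hlt
      · have := hgt (k + 1) (Nat.lt_succ_self _) (by omega)
        rw [show 2 * i + 2 = k + 1 by omega]; exact this


lemma iter_mapsTo (n : ℕ) : MapsTo (S.G^[n]) (Icc (0:ℝ) 1) (Icc (0:ℝ) 1) :=
  S.hGmaps.iterate n

lemma meas_inter_pre {P A : Set ℝ} (hP : MeasurableSet P) {s c : ℝ}
    (hf : ∀ x ∈ P, S.G x = s * x + c) (hA : MeasurableSet A) :
    MeasurableSet (P ∩ S.G ⁻¹' A) := by
  have he : P ∩ S.G ⁻¹' A = P ∩ (fun x => s * x + c) ⁻¹' A := by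
    ext x
    simp only [mem_inter_iff, mem_preimage]
    exact and_congr_right fun hx => by rw [hf x hx]
  rw [he]
  exact hP.inter (((measurable_id.const_mul s).add_const c) hA)

lemma G_pre_decomp (A : Set ℝ) : Icc (0:ℝ) 1 ∩ S.G ⁻¹' A =
    (Ico 0 (S.a 0) ∩ S.G ⁻¹' A) ∪
    (⋃ i ∈ Finset.range S.kI, Icc (S.a (2 * i)) (S.a (2 * i + 1)) ∩ S.G ⁻¹' A) ∪
    (⋃ i ∈ Finset.range S.kI, ⋃ (_ : i + 1 < S.kI),
      Ioo (S.a (2 * i + 1)) (S.a (2 * i + 2)) ∩ S.G ⁻¹' A) ∪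
    (Ioc (S.a (2 * S.kI - 1)) 1 ∩ S.G ⁻¹' A) := by
  ext x
  simp only [mem_union, mem_iUnion, Finset.mem_range, mem_inter_iff, mem_preimage, exists_prop]
  constructor
  · rintro ⟨hx, hGx⟩
    rcases S.cover x hx with h | ⟨i, hi, h⟩ | ⟨i, hi, h⟩ | h
    · exact Or.inl (Or.inl (Or.inl ⟨h, hGx⟩))
    · exact Or.inl (Or.inl (Or.inr ⟨i, hi, h, hGx⟩))
    · exact Or.inl (Or.inr ⟨i, (by omega : i < S.kI), hi, h, hGx⟩)
    · exact Or.inr ⟨h, hGx⟩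
  · have hIcc : Icc (0:ℝ) 1 = Icc 0 1 := rfl
    rintro (((⟨h, hGx⟩ | ⟨i, hi, h, hGx⟩) | ⟨i, _, hi, h, hGx⟩) | ⟨h, hGx⟩)
    · refine ⟨⟨h.1, h.2.le.trans (S.a_le_one 0 (by have := S.hkI; omega))⟩, hGx⟩
    · exact ⟨S.Icc_piece_subset i hi h, hGx⟩
    · refine ⟨⟨(S.a_nonneg _ (by omega)).trans h.1.le,
        h.2.le.trans (S.a_le_one _ (by omega))⟩, hGx⟩
    · exact ⟨⟨(S.a_nonneg _ (by have := S.hkI; omega)).trans h.1.le, h.2⟩, hGx⟩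

lemma measG_pre {A : Set ℝ} (hA : MeasurableSet A) :
    MeasurableSet (Icc (0:ℝ) 1 ∩ S.G ⁻¹' A) := by
  rw [S.G_pre_decomp A]
  have hL : MeasurableSet (Ico 0 (S.a 0) ∩ S.G ⁻¹' A) := by
    rcases lt_or_ge 0 (S.a 0) with h | h
    · obtain ⟨s, c, _, hf, _⟩ := S.hGJleft h
      exact S.meas_inter_pre measurableSet_Ico hf hA
    · have : Ico (0:ℝ) (S.a 0) = ∅ := Ico_eq_empty (by linarith [S.ha0])
      simp [this]
  have hR : MeasurableSet (Ioc (S.a (2 * S.kI - 1)) 1 ∩ S.G ⁻¹' A) := by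
    rcases lt_or_ge (S.a (2 * S.kI - 1)) 1 with h | h
    · obtain ⟨s, c, _, hf, _⟩ := S.hGJright h
      exact S.meas_inter_pre measurableSet_Ioc hf hA
    · have : Ioc (S.a (2 * S.kI - 1)) (1:ℝ) = ∅ := Ioc_eq_empty (by linarith [S.ha1])
      simp [this]
  refine (((hL.union ?_).union ?_).union hR)
  · refine (Finset.range S.kI).measurableSet_biUnion fun i hi => ?_
    obtain ⟨s, c, _, hf, _⟩ := S.hGI i (Finset.mem_range.mp hi)
    exact S.meas_inter_pre measurableSet_Icc hf hA
  · refine (Finset.range S.kI).measurableSet_biUnion fun i _ => ?_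
    refine MeasurableSet.iUnion fun hi => ?_
    obtain ⟨s, c, _, hf, _⟩ := S.hGJmid i hi
    exact S.meas_inter_pre measurableSet_Ioo hf hA

lemma measGiter_pre : ∀ n : ℕ, ∀ {A : Set ℝ}, MeasurableSet A →
    MeasurableSet (Icc (0:ℝ) 1 ∩ (S.G^[n]) ⁻¹' A) := by
  intro n
  induction n with
  | zero =>
    intro A hA
    simpa using measurableSet_Icc.inter hA
  | succ n ih =>
    intro A hA
    have key : Icc (0:ℝ) 1 ∩ (S.G^[n + 1]) ⁻¹' A =
        Icc (0:ℝ) 1 ∩ S.G ⁻¹' (Icc (0:ℝ) 1 ∩ (S.G^[n]) ⁻¹' A) := by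
      ext x
      simp only [mem_inter_iff, mem_preimage, Function.iterate_succ_apply]
      constructor
      · rintro ⟨hx, h⟩
        exact ⟨hx, S.hGmaps hx, h⟩
      · rintro ⟨hx, _, h⟩
        exact ⟨hx, h⟩
    rw [key]
    exact S.measG_pre (ih hA)



/-- The `i`-th term of the series defining `ψ`. -/
noncomputable def term (x : ℝ) (i : ℕ) : ℝ :=
  if S.G^[i] x ∈ S.IU then 0 else (2:ℝ)⁻¹ ^ (i + 1)

lemma psi_eq_tsum_term (x : ℝ) : S.psi x = ∑' i, S.term x i := rfl

lemma term_nonneg (x : ℝ) (i : ℕ) : 0 ≤ S.term x i := by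
  unfold term; split <;> positivity

lemma term_le (x : ℝ) (i : ℕ) : S.term x i ≤ (2:ℝ)⁻¹ ^ (i + 1) := by
  unfold term; split
  · positivity
  · exact le_rfl

lemma summable_pow : Summable (fun i : ℕ => (2:ℝ)⁻¹ ^ (i + 1)) := by
  have h : Summable (fun i : ℕ => (2:ℝ)⁻¹ ^ i) :=
    summable_geometric_of_lt_one (by norm_num) (by norm_num)
  simpa using (summable_nat_add_iff 1).mpr h

lemma summable_term (x : ℝ) : Summable (S.term x) :=
  Summable.of_nonneg_of_le (S.term_nonneg x) (S.term_le x) summable_pow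

lemma tsum_pow_eq_one : ∑' i : ℕ, (2:ℝ)⁻¹ ^ (i + 1) = 1 := by
  have h1 : ∀ i : ℕ, (2:ℝ)⁻¹ ^ (i + 1) = 2⁻¹ * 2⁻¹ ^ i := fun i => by ring
  rw [tsum_congr h1, tsum_mul_left, tsum_geometric_of_lt_one (by norm_num) (by norm_num)]
  norm_num

lemma psi_nonneg (x : ℝ) : 0 ≤ S.psi x := by
  rw [psi_eq_tsum_term]
  exact tsum_nonneg (S.term_nonneg x)

lemma psi_le_one (x : ℝ) : S.psi x ≤ 1 := by
  rw [psi_eq_tsum_term, ← tsum_pow_eq_one]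
  exact Summable.tsum_le_tsum (S.term_le x) (S.summable_term x) summable_pow

lemma term_succ (x : ℝ) (i : ℕ) : S.term x (i + 1) = 2⁻¹ * S.term (S.G x) i := by
  unfold term
  rw [Function.iterate_succ_apply]
  split <;> simp_all
  ring

lemma psi_rec {x : ℝ} (hx : x ∈ S.IU) : S.psi x = 2⁻¹ * S.psi (S.G x) := by
  rw [psi_eq_tsum_term, Summable.tsum_eq_zero_add (S.summable_term x)]
  have h0 : S.term x 0 = 0 := by unfold term; simp [hx]
  rw [h0, zero_add, tsum_congr (S.term_succ x), tsum_mul_left, ← psi_eq_tsum_term]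

lemma psi_decomp_notIU {x : ℝ} (hx : x ∉ S.IU) :
    S.psi x = 2⁻¹ + ∑' i, S.term x (i + 1) := by
  rw [psi_eq_tsum_term, Summable.tsum_eq_zero_add (S.summable_term x)]
  have h0 : S.term x 0 = 2⁻¹ := by unfold term; simp [hx]
  rw [h0]

lemma psi_ge_half {x : ℝ} (hx : x ∉ S.IU) : 2⁻¹ ≤ S.psi x := by
  rw [S.psi_decomp_notIU hx]
  have : 0 ≤ ∑' i, S.term x (i + 1) :=
    tsum_nonneg fun i => S.term_nonneg x (i + 1)
  linarith

lemma psi_notIU_forces {x : ℝ} (hx : x ∉ S.IU) (h : S.psi x ≤ 2⁻¹) :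
    ∀ i : ℕ, 1 ≤ i → S.G^[i] x ∈ S.IU := by
  have hsum : Summable (fun i => S.term x (i + 1)) :=
    (summable_nat_add_iff 1).mpr (S.summable_term x)
  have htail : ∑' i, S.term x (i + 1) = 0 := by
    have h1 := S.psi_decomp_notIU hx
    have h2 : 0 ≤ ∑' i, S.term x (i + 1) :=
      tsum_nonneg fun i => S.term_nonneg x (i + 1)
    linarith
  intro i hi
  obtain ⟨j, rfl⟩ : ∃ j, i = j + 1 := ⟨i - 1, by omega⟩
  have hj : S.term x (j + 1) = 0 := by
    have hle : S.term x (j + 1) ≤ ∑' i, S.term x (i + 1) :=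
      Summable.le_tsum hsum j fun k _ => S.term_nonneg x (k + 1)
    have := S.term_nonneg x (j + 1)
    linarith [htail ▸ hle]
  by_contra hmem
  have : S.term x (j + 1) = (2:ℝ)⁻¹ ^ (j + 2) := by unfold term; rw [if_neg hmem]
  rw [this] at hj
  have : (0:ℝ) < (2:ℝ)⁻¹ ^ (j + 2) := by positivity
  linarith

lemma psi_le_iff (x : ℝ) (r : ℝ) :
    S.psi x ≤ r ↔ ∀ n, ∑ i ∈ Finset.range n, S.term x i ≤ r := by
  constructor
  · intro h n
    exact le_trans (Summable.sum_le_tsum (Finset.range n) (fun i _ => S.term_nonneg x i)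
      (S.summable_term x)) h
  · intro h
    rw [psi_eq_tsum_term]
    exact Summable.tsum_le_of_sum_range_le (S.summable_term x) h

lemma meas_psi_le (t : ℝ) : MeasurableSet (Icc (0:ℝ) 1 ∩ {x | S.psi x ≤ t}) := by
  have hset : Icc (0:ℝ) 1 ∩ {x | S.psi x ≤ t} =
      ⋂ n : ℕ, (Icc (0:ℝ) 1 ∩ {x | ∑ i ∈ Finset.range n, S.term x i ≤ t}) := by
    ext x
    simp only [mem_inter_iff, mem_iInter, mem_setOf_eq]
    constructor
    · rintro ⟨hx, h⟩ n
      exact ⟨hx, (S.psi_le_iff x t).mp h n⟩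
    · intro h
      rcases Nat.exists_eq_succ_of_ne_zero (n := 1) one_ne_zero with _
      exact ⟨(h 0).1, (S.psi_le_iff x t).mpr fun n => (h n).2⟩
  rw [hset]
  refine MeasurableSet.iInter fun n => ?_
  set Fn : ℝ → ℝ := fun x => ∑ i ∈ Finset.range n,
    (Icc (0:ℝ) 1 ∩ (S.G^[i]) ⁻¹' S.IUᶜ).indicator (fun _ => (2:ℝ)⁻¹ ^ (i + 1)) x with hFn
  have hmeas : Measurable Fn := by
    refine Finset.measurable_sum _ fun i _ => ?_
    exact (measurable_const).indicator (S.measGiter_pre i S.measurable_IU.compl)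
  have heq : Icc (0:ℝ) 1 ∩ {x | ∑ i ∈ Finset.range n, S.term x i ≤ t} =
      Icc (0:ℝ) 1 ∩ Fn ⁻¹' (Iic t) := by
    ext x
    simp only [mem_inter_iff, mem_setOf_eq, mem_preimage, mem_Iic, hFn]
    refine and_congr_right fun hx => ?_
    have : ∀ i, (Icc (0:ℝ) 1 ∩ (S.G^[i]) ⁻¹' S.IUᶜ).indicator
        (fun _ => (2:ℝ)⁻¹ ^ (i + 1)) x = S.term x i := by
      intro i
      unfold term
      rw [Set.indicator_apply]
      by_cases hmem : S.G^[i] x ∈ S.IU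
      · simp [hmem]
      · simp [hmem, hx]
    rw [Finset.sum_congr rfl fun i _ => this i]
  rw [heq]
  exact measurableSet_Icc.inter (hmeas measurableSet_Iic)


lemma vol_affine_pre {s : ℝ} (hs : s ≠ 0) (c : ℝ) (A : Set ℝ) :
    volume ((fun x => s * x + c) ⁻¹' A) = ENNReal.ofReal |s⁻¹| * volume A := by
  have he : (fun x => s * x + c) ⁻¹' A = (s * ·) ⁻¹' ((fun y => y + c) ⁻¹' A) := rfl
  rw [he, Real.volume_preimage_mul_left hs, measure_preimage_add_right]

lemma branch_pre (i : ℕ) (hi : i < S.kI) {A : Set ℝ} (hA : A ⊆ Icc (0:ℝ) 1) :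
    ∃ s c : ℝ, s ≠ 0 ∧ |s⁻¹| = S.a (2 * i + 1) - S.a (2 * i) ∧
      Icc (S.a (2 * i)) (S.a (2 * i + 1)) ∩ S.G ⁻¹' A = (fun x => s * x + c) ⁻¹' A := by
  obtain ⟨s, c, hslope, hf, hbij⟩ := S.hGI i hi
  have hlen : 0 < S.a (2 * i + 1) - S.a (2 * i) := by
    have := S.a_strict (2 * i) (2 * i + 1) (by omega) (by omega)
    linarith
  have hs : s ≠ 0 := by
    intro h
    rw [h] at hslope; simp at hslope
  have hsi : |s⁻¹| = S.a (2 * i + 1) - S.a (2 * i) := by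
    rw [abs_inv]
    field_simp
    nlinarith [hslope, abs_pos.mpr hs]
  refine ⟨s, c, hs, hsi, ?_⟩
  ext x
  simp only [mem_inter_iff, mem_preimage]
  constructor
  · rintro ⟨hx, hGx⟩
    rwa [← hf x hx]
  · intro hx
    have hmem : s * x + c ∈ Icc (0:ℝ) 1 := hA hx
    obtain ⟨y, hy, hGy⟩ := hbij.2.2 hmem
    have : s * y + c = s * x + c := by rw [← hf y hy, hGy]
    have hxy : y = x := by
      have := mul_left_cancel₀ hs (by linarith : s * y = s * x)
      exact this
    subst hxy
    exact ⟨hy, by rwa [hf _ hy]⟩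

lemma vol_branch (i : ℕ) (hi : i < S.kI) {A : Set ℝ} (hA : A ⊆ Icc (0:ℝ) 1) :
    volume (Icc (S.a (2 * i)) (S.a (2 * i + 1)) ∩ S.G ⁻¹' A) =
      ENNReal.ofReal (S.a (2 * i + 1) - S.a (2 * i)) * volume A := by
  obtain ⟨s, c, hs, hsi, he⟩ := S.branch_pre i hi hA
  rw [he, vol_affine_pre hs, hsi]

lemma vol_scale {A : Set ℝ} (hA : MeasurableSet A) (hA1 : A ⊆ Icc (0:ℝ) 1) :
    volume (S.IU ∩ S.G ⁻¹' A) = ENNReal.ofReal S.lam * volume A := by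
  have hdecomp : S.IU ∩ S.G ⁻¹' A =
      ⋃ i ∈ Finset.range S.kI, (Icc (S.a (2 * i)) (S.a (2 * i + 1)) ∩ S.G ⁻¹' A) := by
    ext x
    simp only [IU, mem_inter_iff, mem_iUnion, Finset.mem_range, exists_prop, mem_preimage]
    tauto
  rw [hdecomp]
  have hmeas : ∀ i ∈ Finset.range S.kI,
      MeasurableSet (Icc (S.a (2 * i)) (S.a (2 * i + 1)) ∩ S.G ⁻¹' A) := by
    intro i hi
    obtain ⟨sc, c, _, hf, _⟩ := S.hGI i (Finset.mem_range.mp hi)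
    exact S.meas_inter_pre measurableSet_Icc hf hA
  have hdisj : (↑(Finset.range S.kI) : Set ℕ).PairwiseDisjoint
      (fun i => Icc (S.a (2 * i)) (S.a (2 * i + 1)) ∩ S.G ⁻¹' A) := by
    intro i hi j hj hij
    simp only [Finset.coe_range, mem_Iio] at hi hj
    exact Disjoint.mono inter_subset_left inter_subset_left
      (S.I_disjoint i hi j hj hij)
  rw [measure_biUnion_finset hdisj hmeas]
  have : ∀ i ∈ Finset.range S.kI,
      volume (Icc (S.a (2 * i)) (S.a (2 * i + 1)) ∩ S.G ⁻¹' A) =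
        ENNReal.ofReal (S.a (2 * i + 1) - S.a (2 * i)) * volume A := fun i hi =>
    S.vol_branch i (Finset.mem_range.mp hi) hA1
  rw [Finset.sum_congr rfl this, ← Finset.sum_mul, lam,
    ← ENNReal.ofReal_sum_of_nonneg]
  intro i hi
  have := S.a_strict (2 * i) (2 * i + 1) (by omega) (by simp at hi; omega)
  linarith


lemma vol_IU : volume S.IU = ENNReal.ofReal S.lam := by
  have hdisj : (↑(Finset.range S.kI) : Set ℕ).PairwiseDisjoint
      (fun i => Icc (S.a (2 * i)) (S.a (2 * i + 1))) := by
    intro i hi j hj hij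
    simp only [Finset.coe_range, mem_Iio] at hi hj
    exact S.I_disjoint i hi j hj hij
  have hnn : ∀ i ∈ Finset.range S.kI, 0 ≤ S.a (2 * i + 1) - S.a (2 * i) := by
    intro i hi
    have := S.a_strict (2 * i) (2 * i + 1) (by omega) (by simp at hi; omega)
    linarith
  rw [IU, measure_biUnion_finset hdisj fun i _ => measurableSet_Icc, lam,
    ENNReal.ofReal_sum_of_nonneg hnn]
  exact Finset.sum_congr rfl fun i hi => Real.volume_Icc

lemma lam_nonneg : 0 ≤ S.lam := by
  refine Finset.sum_nonneg fun i hi => ?_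
  have := S.a_strict (2 * i) (2 * i + 1) (by omega) (by simp at hi; omega)
  linarith

lemma lam_lt_one : S.lam < 1 := by
  by_cases hk : S.kI = 1
  · have : S.lam = S.a 1 - S.a 0 := by
      rw [lam, hk]
      simp
    rw [this]
    have := S.hIlen 0 (by omega)
    simp only [Nat.mul_zero, Nat.zero_add] at this
    linarith
  · have hk2 : 2 ≤ S.kI := by have := S.hkI; omega
    have hgap : 0 < S.a 2 - S.a 1 := by
      have := S.a_strict 1 2 (by omega) (by omega)
      linarith
    have hdisjoint : Disjoint S.IU (Ioo (S.a 1) (S.a 2)) := by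
      rw [Set.disjoint_left]
      intro x hx hx2
      obtain ⟨i, hi, hxi⟩ := S.mem_IU_iff.mp hx
      rcases Nat.eq_zero_or_pos i with rfl | hipos
      · simp only [Nat.mul_zero, Nat.zero_add] at hxi
        exact absurd (hxi.2.trans_lt hx2.1) (lt_irrefl x)
      · have : S.a 2 ≤ S.a (2 * i) := S.a_mono 2 (2 * i) (by omega) (by omega)
        have := hxi.1
        have := hx2.2
        linarith
    have hsub : S.IU ∪ Ioo (S.a 1) (S.a 2) ⊆ Icc (0:ℝ) 1 := by
      refine union_subset S.IU_subset ?_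
      refine Ioo_subset_Icc_self.trans (Icc_subset_Icc ?_ ?_)
      · exact S.a_nonneg 1 (by omega)
      · exact S.a_le_one 2 (by omega)
    have hle : volume S.IU + volume (Ioo (S.a 1) (S.a 2)) ≤ 1 := by
      rw [← measure_union hdisjoint measurableSet_Ioo]
      calc volume (S.IU ∪ Ioo (S.a 1) (S.a 2)) ≤ volume (Icc (0:ℝ) 1) :=
            measure_mono hsub
        _ = 1 := by rw [Real.volume_Icc]; norm_num
    rw [S.vol_IU, Real.volume_Ioo] at hle
    rw [← ENNReal.ofReal_add S.lam_nonneg (by linarith), ← ENNReal.ofReal_one] at hle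
    have := (ENNReal.ofReal_le_ofReal_iff (by norm_num)).mp hle
    linarith

lemma slope_facts {s L : ℝ} (h : |s| * L = 1) (hL : L ≤ 1) : s ≠ 0 ∧ |s⁻¹| ≤ 1 := by
  have hs : s ≠ 0 := by intro h0; rw [h0] at h; simp at h
  have habs : 0 < |s| := abs_pos.mpr hs
  have hLpos : 0 < L := by nlinarith
  refine ⟨hs, ?_⟩
  rw [abs_inv]
  have hinv : |s|⁻¹ = L := by
    field_simp
    linarith
  rw [hinv]
  exact hL

lemma vol_piece_le {P A : Set ℝ} {s c : ℝ} (hs : s ≠ 0) (hsi : |s⁻¹| ≤ 1)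
    (hf : ∀ x ∈ P, S.G x = s * x + c) :
    volume (P ∩ S.G ⁻¹' A) ≤ volume A := by
  have hsub : P ∩ S.G ⁻¹' A ⊆ (fun x => s * x + c) ⁻¹' A := by
    rintro x ⟨hx, hGx⟩
    simpa [← hf x hx] using hGx
  calc volume (P ∩ S.G ⁻¹' A) ≤ volume ((fun x => s * x + c) ⁻¹' A) := measure_mono hsub
    _ = ENNReal.ofReal |s⁻¹| * volume A := vol_affine_pre hs c A
    _ ≤ 1 * volume A := by
        gcongr
        exact ENNReal.ofReal_le_one.mpr hsi
    _ = volume A := one_mul _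

lemma vol_pre_le (A : Set ℝ) :
    volume (Icc (0:ℝ) 1 ∩ S.G ⁻¹' A) ≤ ((2 * S.kI + 2 : ℕ) : ℝ≥0∞) * volume A := by
  rw [S.G_pre_decomp A]
  have hX1 : volume (Ico 0 (S.a 0) ∩ S.G ⁻¹' A) ≤ volume A := by
    rcases lt_or_ge 0 (S.a 0) with h | h
    · obtain ⟨s, c, hsl, hf, _⟩ := S.hGJleft h
      obtain ⟨hs, hsi⟩ := slope_facts hsl (by linarith [S.hJlenL])
      exact S.vol_piece_le hs hsi hf
    · have : Ico (0:ℝ) (S.a 0) = ∅ := Ico_eq_empty (by linarith [S.ha0])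
      simp [this]
  have hX4 : volume (Ioc (S.a (2 * S.kI - 1)) 1 ∩ S.G ⁻¹' A) ≤ volume A := by
    rcases lt_or_ge (S.a (2 * S.kI - 1)) 1 with h | h
    · obtain ⟨s, c, hsl, hf, _⟩ := S.hGJright h
      obtain ⟨hs, hsi⟩ := slope_facts hsl (by linarith [S.hJlenR])
      exact S.vol_piece_le hs hsi hf
    · have : Ioc (S.a (2 * S.kI - 1)) (1:ℝ) = ∅ := Ioc_eq_empty (by linarith [S.ha1])
      simp [this]
  have hX2 : volume (⋃ i ∈ Finset.range S.kI,
      Icc (S.a (2 * i)) (S.a (2 * i + 1)) ∩ S.G ⁻¹' A) ≤ (S.kI : ℝ≥0∞) * volume A := by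
    refine (measure_biUnion_finset_le _ _).trans ?_
    calc ∑ i ∈ Finset.range S.kI, volume (Icc (S.a (2 * i)) (S.a (2 * i + 1)) ∩ S.G ⁻¹' A)
        ≤ ∑ _i ∈ Finset.range S.kI, volume A := by
          refine Finset.sum_le_sum fun i hi => ?_
          obtain ⟨s, c, hsl, hf, _⟩ := S.hGI i (Finset.mem_range.mp hi)
          obtain ⟨hs, hsi⟩ := slope_facts hsl
            (by linarith [S.hIlen i (Finset.mem_range.mp hi)])
          exact S.vol_piece_le hs hsi hf
      _ = (S.kI : ℝ≥0∞) * volume A := by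
          rw [Finset.sum_const, Finset.card_range, nsmul_eq_mul]
  have hX3 : volume (⋃ i ∈ Finset.range S.kI, ⋃ (_ : i + 1 < S.kI),
      Ioo (S.a (2 * i + 1)) (S.a (2 * i + 2)) ∩ S.G ⁻¹' A) ≤ (S.kI : ℝ≥0∞) * volume A := by
    refine (measure_biUnion_finset_le _ _).trans ?_
    calc ∑ i ∈ Finset.range S.kI, volume (⋃ (_ : i + 1 < S.kI),
          Ioo (S.a (2 * i + 1)) (S.a (2 * i + 2)) ∩ S.G ⁻¹' A)
        ≤ ∑ _i ∈ Finset.range S.kI, volume A := by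
          refine Finset.sum_le_sum fun i _ => ?_
          by_cases hi : i + 1 < S.kI
          · simp only [hi, iUnion_true]
            obtain ⟨s, c, hsl, hf, _⟩ := S.hGJmid i hi
            obtain ⟨hs, hsi⟩ := slope_facts hsl (by linarith [S.hJlenM i hi])
            exact S.vol_piece_le hs hsi hf
          · simp [hi]
      _ = (S.kI : ℝ≥0∞) * volume A := by
          rw [Finset.sum_const, Finset.card_range, nsmul_eq_mul]
  calc volume _ ≤ volume (Ico 0 (S.a 0) ∩ S.G ⁻¹' A) +
        volume (⋃ i ∈ Finset.range S.kI, Icc (S.a (2 * i)) (S.a (2 * i + 1)) ∩ S.G ⁻¹' A) +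
        volume (⋃ i ∈ Finset.range S.kI, ⋃ (_ : i + 1 < S.kI),
          Ioo (S.a (2 * i + 1)) (S.a (2 * i + 2)) ∩ S.G ⁻¹' A) +
        volume (Ioc (S.a (2 * S.kI - 1)) 1 ∩ S.G ⁻¹' A) := by
        refine (measure_union_le _ _).trans ?_
        gcongr
        refine (measure_union_le _ _).trans ?_
        gcongr
        exact measure_union_le _ _
    _ ≤ volume A + (S.kI : ℝ≥0∞) * volume A + (S.kI : ℝ≥0∞) * volume A + volume A := by
        gcongr
    _ = ((2 * S.kI + 2 : ℕ) : ℝ≥0∞) * volume A := by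
        push_cast
        ring

lemma mem_Lam {n : ℕ} {x : ℝ} :
    x ∈ S.Lam n ↔ x ∈ Icc (0:ℝ) 1 ∧ ∀ i < n, S.G^[i] x ∈ S.IU := Iff.rfl

lemma Lam_subset (n : ℕ) : S.Lam n ⊆ Icc (0:ℝ) 1 := fun _ hx => hx.1

lemma Lam_zero : S.Lam 0 = Icc (0:ℝ) 1 := by
  ext x
  simp [mem_Lam]

lemma Lam_succ (n : ℕ) : S.Lam (n + 1) = S.IU ∩ S.G ⁻¹' (S.Lam n) := by
  ext x
  simp only [mem_Lam, mem_inter_iff, mem_preimage]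
  constructor
  · rintro ⟨hx, h⟩
    refine ⟨h 0 (by omega), S.hGmaps hx, fun i hi => ?_⟩
    rw [← Function.iterate_succ_apply]
    exact h (i + 1) (by omega)
  · rintro ⟨hx, hGx, h⟩
    refine ⟨S.IU_subset hx, fun i hi => ?_⟩
    rcases Nat.eq_zero_or_pos i with rfl | hipos
    · simpa using hx
    · obtain ⟨j, rfl⟩ : ∃ j, i = j + 1 := ⟨i - 1, by omega⟩
      rw [Function.iterate_succ_apply]
      exact h j (by omega)

lemma meas_Lam (n : ℕ) : MeasurableSet (S.Lam n) := by
  have : S.Lam n = Icc (0:ℝ) 1 ∩ ⋂ i, ⋂ (_ : i < n), (Icc (0:ℝ) 1 ∩ (S.G^[i]) ⁻¹' S.IU) := by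
    ext x
    simp only [mem_Lam, mem_inter_iff, mem_iInter, mem_preimage]
    constructor
    · rintro ⟨hx, h⟩
      exact ⟨hx, fun i hi => ⟨hx, h i hi⟩⟩
    · rintro ⟨hx, h⟩
      exact ⟨hx, fun i hi => (h i hi).2⟩
  rw [this]
  exact measurableSet_Icc.inter (MeasurableSet.iInter fun i =>
    MeasurableSet.iInter fun _ => S.measGiter_pre i S.measurable_IU)

lemma vol_Lam (n : ℕ) : volume (S.Lam n) = ENNReal.ofReal S.lam ^ n := by
  induction n with
  | zero =>
    rw [Lam_zero, Real.volume_Icc, pow_zero]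
    norm_num
  | succ n ih =>
    rw [Lam_succ, S.vol_scale (S.meas_Lam n) (S.Lam_subset n), ih, pow_succ, mul_comm]

lemma vol_M : volume {x | x ∈ Icc (0:ℝ) 1 ∧ ∀ i, 1 ≤ i → S.G^[i] x ∈ S.IU} = 0 := by
  have hsub : ∀ n, {x | x ∈ Icc (0:ℝ) 1 ∧ ∀ i, 1 ≤ i → S.G^[i] x ∈ S.IU} ⊆
      Icc (0:ℝ) 1 ∩ S.G ⁻¹' (S.Lam n) := by
    rintro n x ⟨hx, h⟩
    refine ⟨hx, S.hGmaps hx, fun i hi => ?_⟩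
    rw [← Function.iterate_succ_apply]
    exact h (i + 1) (by omega)
  have hbound : ∀ n, volume {x | x ∈ Icc (0:ℝ) 1 ∧ ∀ i, 1 ≤ i → S.G^[i] x ∈ S.IU} ≤
      ((2 * S.kI + 2 : ℕ) : ℝ≥0∞) * ENNReal.ofReal S.lam ^ n := by
    intro n
    calc volume _ ≤ volume (Icc (0:ℝ) 1 ∩ S.G ⁻¹' (S.Lam n)) := measure_mono (hsub n)
      _ ≤ ((2 * S.kI + 2 : ℕ) : ℝ≥0∞) * volume (S.Lam n) := S.vol_pre_le _
      _ = ((2 * S.kI + 2 : ℕ) : ℝ≥0∞) * ENNReal.ofReal S.lam ^ n := by rw [S.vol_Lam n]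
  have hc : ENNReal.ofReal S.lam < 1 := by
    rw [← ENNReal.ofReal_one]
    exact ENNReal.ofReal_lt_ofReal_iff_of_nonneg S.lam_nonneg |>.mpr S.lam_lt_one
  have htend : Tendsto (fun n => ((2 * S.kI + 2 : ℕ) : ℝ≥0∞) * ENNReal.ofReal S.lam ^ n)
      atTop (𝓝 0) := by
    have h1 := ENNReal.tendsto_pow_atTop_nhds_zero_of_lt_one hc
    have h2 := ENNReal.Tendsto.const_mul (a := ((2 * S.kI + 2 : ℕ) : ℝ≥0∞)) h1
      (Or.inr (ENNReal.natCast_ne_top _))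
    simpa using h2
  exact le_antisymm (ge_of_tendsto' htend hbound) zero_le

end CantorData


/-- self-similarity of the distribution function:
`F(s) = λ F(2s)` for all `s ∈ [0, 1/2]`. -/
theorem F_self_similar (S : CantorData) (s : ℝ)
    (hs : s ∈ Set.Icc (0:ℝ) (1 / 2)) :
    S.F s = S.lam * S.F (2 * s) := by
  obtain ⟨hs0, hs2⟩ := hs
  set A : Set ℝ := Icc (0:ℝ) 1 ∩ {x | S.psi x ≤ 2 * s} with hA
  have hAmeas : MeasurableSet A := S.meas_psi_le (2 * s)
  have hAsub : A ⊆ Icc (0:ℝ) 1 := inter_subset_left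
  have hT1 : {x | S.psi x ≤ s} ∩ Icc (0:ℝ) 1 =
      (S.IU ∩ S.G ⁻¹' A) ∪ (({x | S.psi x ≤ s} ∩ Icc (0:ℝ) 1) \ S.IU) := by
    ext x
    simp only [mem_union, mem_inter_iff, mem_setOf_eq, mem_diff, mem_preimage, hA]
    constructor
    · rintro ⟨hpsi, hx⟩
      by_cases hIU : x ∈ S.IU
      · left
        refine ⟨hIU, S.hGmaps hx, ?_⟩
        have hrec := S.psi_rec hIU
        rw [hrec] at hpsi
        linarith
      · exact Or.inr ⟨⟨hpsi, hx⟩, hIU⟩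
    · rintro (⟨hIU, hGx, hGpsi⟩ | ⟨hmem, -⟩)
      · have hx : x ∈ Icc (0:ℝ) 1 := S.IU_subset hIU
        have hrec := S.psi_rec hIU
        exact ⟨by rw [hrec]; linarith, hx⟩
      · exact hmem
  have hnull : volume (({x | S.psi x ≤ s} ∩ Icc (0:ℝ) 1) \ S.IU) = 0 := by
    refine measure_mono_null ?_ S.vol_M
    rintro x ⟨⟨hpsi, hx⟩, hIU⟩
    refine ⟨hx, S.psi_notIU_forces hIU (by norm_num at hpsi ⊢; linarith)⟩
  have hFs : S.mes {x | S.psi x ≤ s} = ENNReal.ofReal S.lam * volume A := by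
    rw [CantorData.mes, Measure.restrict_apply' measurableSet_Icc, hT1]
    have hval : volume (S.IU ∩ S.G ⁻¹' A ∪ ({x | S.psi x ≤ s} ∩ Icc (0:ℝ) 1) \ S.IU) =
        volume (S.IU ∩ S.G ⁻¹' A) := by
      refine le_antisymm ?_ (measure_mono subset_union_left)
      calc volume (S.IU ∩ S.G ⁻¹' A ∪ ({x | S.psi x ≤ s} ∩ Icc (0:ℝ) 1) \ S.IU)
          ≤ volume (S.IU ∩ S.G ⁻¹' A) +
            volume ((({x | S.psi x ≤ s} ∩ Icc (0:ℝ) 1)) \ S.IU) := measure_union_le _ _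
        _ = volume (S.IU ∩ S.G ⁻¹' A) := by rw [hnull, add_zero]
    rw [hval, S.vol_scale hAmeas hAsub]
  have hF2s : S.mes {x | S.psi x ≤ 2 * s} = volume A := by
    rw [CantorData.mes, Measure.restrict_apply' measurableSet_Icc, inter_comm]
  rw [CantorData.F, CantorData.F, hFs, hF2s, ENNReal.toReal_mul,
    ENNReal.toReal_ofReal S.lam_nonneg]
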